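/- Let ‖·‖ be a norm on ℝ^d, let v ∈ ℝ^d with ‖v‖ = 1, let (t_k)_{k≥1} be a strictly increasing unbounded sequence of positive reals, and let x_k ∈ ℤ^d with ‖x_k − t_k·v‖ < 1/k for every k ≥ 1. Set T = {0} ∪ {t_k : k ≥ 1}, and define γ : T → ℝ^d by γ(0) = 0 and γ(t_k) = x_k. Then γ is an almost-geodesic ray in (ℝ^d, ‖·‖), and for every y ∈ ℝ^d the limits lim_{k→∞}(‖x_k‖ − ‖x_k − y‖) and lim_{t→+∞}(‖t·v‖ − ‖t·v − y‖) exist and are equal (that is, γ determines the same Busemann point as the linear geodesic ray t ↦ t·v). -/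
import Mathlib


/-- Lemma 7.3 of Rieffel: if `(t_k)` is strictly increasing, unbounded and positive, and
`x_k ∈ ℤ^d` satisfies `‖x_k − t_k·v‖ < 1/k`, then `γ` with `γ(0) = 0`, `γ(t_k) = x_k` is
an almost-geodesic ray (for `T = {0} ∪ {t_k}`) which determines the same Busemann point
as the linear geodesic ray `t ↦ t·v`. -/
theorem stmt12 {d : ℕ} (N : Seminorm ℝ (Fin d → ℝ))
    (hNdef : ∀ w : Fin d → ℝ, N w = 0 → w = 0)
    (v : Fin d → ℝ) (hv : N v = 1)
    (t : ℕ → ℝ) (htmono : ∀ j k : ℕ, 1 ≤ j → j < k → t j < t k)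
    (htpos : ∀ k, 1 ≤ k → 0 < t k)
    (htunbdd : ∀ M : ℝ, ∃ k, 1 ≤ k ∧ M < t k)
    (x : ℕ → (Fin d → ℤ))
    (hx : ∀ k : ℕ, 1 ≤ k → N ((fun i => (x k i : ℝ)) - t k • v) < 1 / k)
    (T : Set ℝ) (hT : T = {0} ∪ {r : ℝ | ∃ k, 1 ≤ k ∧ r = t k})
    (γ : ℝ → (Fin d → ℝ)) (hγ0 : γ 0 = 0)
    (hγ : ∀ k : ℕ, 1 ≤ k → γ (t k) = fun i => (x k i : ℝ)) :
    -- `γ` is an almost-geodesic ray for the metric coming from the norm `N`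
    (∀ ε : ℝ, 0 < ε → ∃ M : ℝ, ∀ u ∈ T, ∀ s ∈ T, M ≤ s → s ≤ u →
      |N (γ u - γ s) + N (γ s - γ 0) - u| < ε) ∧
    -- `γ` determines the same Busemann point as the ray `t ↦ t·v`
    (∀ y : Fin d → ℝ, ∃ l : ℝ,
      Filter.Tendsto
        (fun k : ℕ => N (fun i => (x k i : ℝ)) - N ((fun i => (x k i : ℝ)) - y))
        Filter.atTop (nhds l) ∧
      Filter.Tendsto (fun r : ℝ => N (r • v) - N (r • v - y))
        Filter.atTop (nhds l)) := by
  -- basic facts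
  have hNsmul : ∀ r : ℝ, 0 ≤ r → N (r • v) = r := by
    intro r hr
    rw [map_smul_eq_mul, hv, mul_one, Real.norm_eq_abs, abs_of_nonneg hr]
  have hrev : ∀ a b : Fin d → ℝ, |N a - N b| ≤ N (a - b) := fun a b =>
    abs_sub_map_le_sub N a b
  constructor
  · -- almost geodesic
    intro ε hε
    obtain ⟨K₀, hK₀⟩ := exists_nat_gt (3 / ε)
    set K := max K₀ 1 with hK
    have hK1 : 1 ≤ K := le_max_right _ _
    have hKε : 3 / (K : ℝ) < ε := by
      have hKpos : (0:ℝ) < K := by positivity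
      have h3K : 3 / ε < (K : ℝ) := lt_of_lt_of_le hK₀ (by exact_mod_cast le_max_left K₀ 1)
      rw [div_lt_iff₀ hKpos]
      rw [div_lt_iff₀ hε] at h3K
      nlinarith
    refine ⟨t K, ?_⟩
    intro u hu s hs hMs hsu
    have hsPos : 0 < s := lt_of_lt_of_le (htpos K hK1) hMs
    rw [hT] at hu hs
    rcases hs with hs | hs
    · exact absurd hs (by simp; linarith)
    rcases hu with hu | hu
    · simp only [Set.mem_singleton_iff] at hu; exact absurd hu (by linarith)
    obtain ⟨j, hj1, hsj⟩ := hs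
    obtain ⟨k, hk1, huk⟩ := hu
    subst hsj huk
    -- j ≤ k and K ≤ j
    have hjk : j ≤ k := by
      by_contra h
      exact absurd (htmono k j hk1 (by omega)) (by linarith)
    have hKj : K ≤ j := by
      by_contra h
      exact absurd (htmono j K hj1 (by omega)) (by linarith)
    set a : Fin d → ℝ := fun i => (x k i : ℝ) with ha
    set b : Fin d → ℝ := fun i => (x j i : ℝ) with hb
    rw [hγ k hk1, hγ j hj1, hγ0, sub_zero, ← ha, ← hb]
    have hxk := hx k hk1
    have hxj := hx j hj1
    rw [← ha] at hxk
    rw [← hb] at hxj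
    have hjkr : (1:ℝ)/k ≤ 1/j := by
      apply one_div_le_one_div_of_le
      · exact_mod_cast lt_of_lt_of_le one_pos (by exact_mod_cast hj1)
      · exact_mod_cast hjk
    have hKjr : (1:ℝ)/j ≤ 1/K := by
      apply one_div_le_one_div_of_le
      · exact_mod_cast lt_of_lt_of_le one_pos (by exact_mod_cast hK1)
      · exact_mod_cast hKj
    have htjk : t j ≤ t k := hsu
    have hNt : N ((t k - t j) • v) = t k - t j := hNsmul _ (by linarith)
    -- upper bound for N (a - b)
    have hub : N (a - b) ≤ 1/k + (t k - t j) + 1/j := by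
      have hdecomp : a - b = (a - t k • v) + ((t k - t j) • v) + (t j • v - b) := by
        module
      calc N (a - b) ≤ N ((a - t k • v) + ((t k - t j) • v)) + N (t j • v - b) := by
            rw [hdecomp]; exact map_add_le_add N _ _
        _ ≤ N (a - t k • v) + N ((t k - t j) • v) + N (t j • v - b) := by
            have := map_add_le_add N (a - t k • v) ((t k - t j) • v); linarith
        _ ≤ 1/k + (t k - t j) + 1/j := by
            have h1 : N (t j • v - b) = N (b - t j • v) := by
              rw [← map_neg_eq_map N, neg_sub]
            rw [hNt, h1]; linarith
    -- lower bound for N (a - b)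
    have hlb : t k - t j - 1/k - 1/j ≤ N (a - b) := by
      have hdecomp : (t k - t j) • v = (t k • v - a) + (a - b) + (b - t j • v) := by
        module
      have h1 : N ((t k - t j) • v) ≤ N (t k • v - a) + N (a - b) + N (b - t j • v) := by
        rw [hdecomp]
        calc N ((t k • v - a) + (a - b) + (b - t j • v))
            ≤ N ((t k • v - a) + (a - b)) + N (b - t j • v) := map_add_le_add N _ _
          _ ≤ N (t k • v - a) + N (a - b) + N (b - t j • v) := by
              have := map_add_le_add N (t k • v - a) (a - b); linarith
      have h2 : N (t k • v - a) = N (a - t k • v) := by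
        rw [← map_neg_eq_map N, neg_sub]
      rw [hNt, h2] at h1
      linarith
    -- bounds for N b
    have hbub : |N b - t j| ≤ 1/j := by
      have := hrev b (t j • v)
      rw [hNsmul _ (le_of_lt (htpos j hj1))] at this
      linarith
    rw [abs_le] at hbub
    rw [abs_lt]
    have hj3 : 3 * ((1:ℝ)/j) < ε := by
      calc 3 * ((1:ℝ)/j) ≤ 3 * (1/(K:ℝ)) := by linarith
        _ = 3 / (K:ℝ) := by ring
        _ < ε := hKε
    constructor <;> linarith [hbub.1, hbub.2, hjkr]
  · -- Busemann point
    intro y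
    set g : ℝ → ℝ := fun r => N ((max r 0) • v) - N ((max r 0) • v - y) with hg
    have hgmono : Monotone g := by
      intro p q hpq
      set p' := max p 0 with hp'
      set q' := max q 0 with hq'
      have hp0 : 0 ≤ p' := le_max_right _ _
      have hpq' : p' ≤ q' := max_le_max hpq le_rfl
      have h1 : N (q' • v - y) ≤ (q' - p') + N (p' • v - y) := by
        have hd : q' • v - y = (q' - p') • v + (p' • v - y) := by module
        calc N (q' • v - y) ≤ N ((q' - p') • v) + N (p' • v - y) := by
              rw [hd]; exact map_add_le_add N _ _
          _ = (q' - p') + N (p' • v - y) := by rw [hNsmul _ (by linarith)]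
      simp only [hg]
      rw [hNsmul _ hp0, hNsmul _ (le_trans hp0 hpq')]
      linarith
    have hgbdd : BddAbove (Set.range g) := by
      refine ⟨N y, ?_⟩
      rintro _ ⟨r, rfl⟩
      simp only [hg]
      have := map_add_le_add N ((max r 0) • v - y) y
      simp only [sub_add_cancel] at this
      linarith
    refine ⟨⨆ r, g r, ?_, ?_⟩
    · -- discrete limit
      have httop : Filter.Tendsto t Filter.atTop Filter.atTop := by
        rw [Filter.tendsto_atTop]
        intro M
        obtain ⟨k0, hk01, hk0⟩ := htunbdd M
        rw [Filter.eventually_atTop]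
        refine ⟨k0 + 1, fun k hk => ?_⟩
        exact le_of_lt (lt_trans hk0 (htmono k0 k hk01 (by omega)))
      have hgt : Filter.Tendsto (fun k => g (t k)) Filter.atTop (nhds (⨆ r, g r)) :=
        (tendsto_atTop_ciSup hgmono hgbdd).comp httop
      have hdiff : Filter.Tendsto
          (fun k : ℕ => (N (fun i => (x k i : ℝ)) - N ((fun i => (x k i : ℝ)) - y)) - g (t k))
          Filter.atTop (nhds 0) := by
        apply squeeze_zero_norm' (a := fun k : ℕ => 2 / (k:ℝ))
        · rw [Filter.eventually_atTop]
          refine ⟨1, fun k hk => ?_⟩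
          set a : Fin d → ℝ := fun i => (x k i : ℝ) with ha
          have hxk := hx k hk
          rw [← ha] at hxk
          have htk0 : 0 ≤ t k := le_of_lt (htpos k hk)
          have hgtk : g (t k) = N (t k • v) - N (t k • v - y) := by
            simp only [hg, max_eq_left htk0]
          have h1 : |N a - N (t k • v)| ≤ N (a - t k • v) := hrev _ _
          have h2 : |N (a - y) - N (t k • v - y)| ≤ N (a - t k • v) := by
            have := hrev (a - y) (t k • v - y)
            have he : (a - y) - (t k • v - y) = a - t k • v := by module
            rwa [he] at this
          rw [Real.norm_eq_abs, hgtk]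
          have h3 : |(N a - N (a - y)) - (N (t k • v) - N (t k • v - y))|
              ≤ |N a - N (t k • v)| + |N (a - y) - N (t k • v - y)| := by
            rw [show (N a - N (a - y)) - (N (t k • v) - N (t k • v - y))
                = (N a - N (t k • v)) - (N (a - y) - N (t k • v - y)) by ring]
            exact abs_sub _ _
          have : (1:ℝ)/k + 1/k = 2/k := by ring
          linarith
        · exact tendsto_const_div_atTop_nhds_zero_nat 2
      have := hgt.add hdiff
      rw [add_zero] at this
      convert this using 2 with k
      ring
    · -- continuous limit
      have : Filter.Tendsto g Filter.atTop (nhds (⨆ r, g r)) :=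
        tendsto_atTop_ciSup hgmono hgbdd
      apply this.congr'
      rw [Filter.eventuallyEq_iff_exists_mem]
      refine ⟨Set.Ici 0, Filter.Ici_mem_atTop 0, fun r hr => ?_⟩
      simp only [hg, max_eq_left (Set.mem_Ici.mp hr)]
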